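/- arXiv:1110.3055 — 4 statements merged into one kernel-verified Lean document; each statement's English description precedes it below -/
import Mathlib

section
/- The composition of two CP-style morphisms is again a CP-style morphism: if f : A → B ⊗ C and g : B → D ⊗ E are morphisms in a dagger symmetric monoidal category C, then the composite (g† ⊗ id)(id ⊗ σ)(g ⊗ id) ∘ (f† ⊗ id)(id ⊗ σ)(f ⊗ id) (with appropriate type matching on the B components) equals (h† ⊗ id)(id ⊗ σ)(h ⊗ id) for the Kraus morphism h = (id ⊗ g)f : A → D ⊗ (E ⊗ C), up to associativity coherence isomorphisms. -/
open CategoryTheory MonoidalCategory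

universe v u

/-- A dagger structure on a category. -/
class Dagger (C : Type u) [Category.{v} C] where
  dag : ∀ {X Y : C}, (X ⟶ Y) → (Y ⟶ X)
  dag_dag : ∀ {X Y : C} (f : X ⟶ Y), dag (dag f) = f
  dag_id : ∀ X : C, dag (𝟙 X) = 𝟙 X
  dag_comp : ∀ {X Y Z : C} (f : X ⟶ Y) (g : Y ⟶ Z), dag (f ≫ g) = dag g ≫ dag f

open Dagger

/-- A dagger symmetric monoidal category. -/
class DaggerSMC (C : Type u) [Category.{v} C] [MonoidalCategory C] [SymmetricCategory C]
    extends Dagger C where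
  dag_tensor : ∀ {X Y X' Y' : C} (f : X ⟶ Y) (g : X' ⟶ Y'), dag (f ⊗ₘ g) = dag f ⊗ₘ dag g
  dag_assoc : ∀ X Y Z : C, dag (α_ X Y Z).hom = (α_ X Y Z).inv
  dag_left : ∀ X : C, dag (λ_ X).hom = (λ_ X).inv
  dag_right : ∀ X : C, dag (ρ_ X).hom = (ρ_ X).inv
  dag_braid : ∀ X Y : C, dag (β_ X Y).hom = (β_ X Y).inv

variable {C : Type u} [Category.{v} C] [MonoidalCategory C] [SymmetricCategory C] [DaggerSMC C]

/-- The CP-form `(f† ⊗ id)(id ⊗ σ)(f ⊗ id)` of a Kraus morphism `f : A ⟶ X ⊗ B`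
(ancillary system `X`), written with coherence isomorphisms inserted. -/
def CPform {A B X : C} (f : A ⟶ X ⊗ B) : A ⊗ B ⟶ A ⊗ B :=
  (f ▷ B) ≫ (α_ X B B).hom ≫ (X ◁ (β_ B B).hom) ≫ (α_ X B B).inv ≫ (dag f ▷ B)

/-- The composition in `CP(C)` of the CP-form of `f : A ⟶ X ⊗ B` with the CP-form of
`g : B ⟶ D ⊗ E`, given by the composition diagram of the CP-construction. -/
def CPcomp {A B X D E : C} (f : A ⟶ X ⊗ B) (g : B ⟶ D ⊗ E) : A ⊗ E ⟶ A ⊗ E :=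
  (f ▷ E) ≫ (α_ X B E).hom ≫ (X ◁ (g ▷ E)) ≫ (X ◁ (α_ D E E).hom) ≫
    (X ◁ (D ◁ (β_ E E).hom)) ≫ (X ◁ (α_ D E E).inv) ≫ (X ◁ (dag g ▷ E)) ≫
    (α_ X B E).inv ≫ (dag f ▷ E)


lemma dag_whiskerLeft (X : C) {Y Z : C} (f : Y ⟶ Z) : dag (X ◁ f) = X ◁ dag f := by
  rw [← MonoidalCategory.id_tensorHom, DaggerSMC.dag_tensor, dag_id,
    MonoidalCategory.id_tensorHom]

lemma dag_whiskerRight {Y Z : C} (f : Y ⟶ Z) (X : C) : dag (f ▷ X) = dag f ▷ X := by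
  rw [← MonoidalCategory.tensorHom_id, DaggerSMC.dag_tensor, dag_id,
    MonoidalCategory.tensorHom_id]

lemma dag_assoc_inv (X Y Z : C) : dag (α_ X Y Z).inv = (α_ X Y Z).hom := by
  rw [← DaggerSMC.dag_assoc, dag_dag]

/-- The composite of two CP-style morphisms is again a CP-style morphism, namely the
CP-form of the Kraus morphism `h = (id ⊗ g) ∘ f` (up to associativity coherence). -/
theorem cp_comp_is_cp_form {A B X D E : C} (f : A ⟶ X ⊗ B) (g : B ⟶ D ⊗ E) :
    CPcomp f g = CPform (f ≫ (X ◁ g) ≫ (α_ X D E).inv) := by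
  simp only [CPcomp, CPform, dag_comp, dag_whiskerLeft, dag_whiskerRight, dag_assoc_inv,
    DaggerSMC.dag_tensor, DaggerSMC.dag_assoc, dag_dag, dag_id, Category.assoc,
    comp_whiskerRight, MonoidalCategory.whiskerLeft_comp]
  monoidal
end

section
/- (Dixmier) Every normal unital *-homomorphism φ : B(H) → B(K) between bounded operator algebras on Hilbert spaces factors as φ = φ₃ ∘ φ₂ ∘ φ₁, where φ₁ : B(H) → B(H ⊗ H') is an ampliation f ↦ f ⊗ id for some Hilbert space H', φ₂ : B(H ⊗ H') → B(K') is induction f ↦ p f p onto a closed subspace K' ⊆ H ⊗ H' with projection p, and φ₃ : B(K') → B(K) is a spatial isomorphism f ↦ u† f u for a unitary u : K → K'. -/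
open ContinuousLinearMap

noncomputable section

variable {H K L : Type} 

/-- Positivity of an `n × n` matrix of operators: `M = B† B` for some matrix `B`.
(An element of a `C*`-algebra is positive when it is of the form `b* b`.) -/
def MatPos {n : ℕ} {E : Type} [NormedAddCommGroup E] [InnerProductSpace ℂ E]
    [CompleteSpace E] (M : Matrix (Fin n) (Fin n) (E →L[ℂ] E)) : Prop :=
  ∃ B : Matrix (Fin n) (Fin n) (E →L[ℂ] E), M = B.conjTranspose * B

variable [NormedAddCommGroup H] [InnerProductSpace ℂ H] [CompleteSpace H]
variable [NormedAddCommGroup K] [InnerProductSpace ℂ K] [CompleteSpace K]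

/-- A map `B(H) → B(K)` is completely positive when all of its matrix amplifications
`φ ⊗ id_{M_n}` send positive elements to positive elements. -/
def CompletelyPositive (φ : (H →L[ℂ] H) → (K →L[ℂ] K)) : Prop :=
  ∀ (n : ℕ) (M : Matrix (Fin n) (Fin n) (H →L[ℂ] H)),
    MatPos M → MatPos (M.map φ)

/-- An operator is a (self-adjoint idempotent) projection. -/
def IsProjectionOp {E : Type} [NormedAddCommGroup E] [InnerProductSpace ℂ E]
    [CompleteSpace E] (p : E →L[ℂ] E) : Prop :=
  ContinuousLinearMap.adjoint p = p ∧ p ∘L p = p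

/-- The operator order: `a ≤ b` when `b - a` is positive, i.e. of the form `c† c`. -/
def OpLE {E : Type} [NormedAddCommGroup E] [InnerProductSpace ℂ E]
    [CompleteSpace E] (a b : E →L[ℂ] E) : Prop :=
  ∃ c : E →L[ℂ] E, b - a = ContinuousLinearMap.adjoint c ∘L c

/-- `s` is the supremum of the family `p` in the operator order. -/
def IsOpLUB {ι E : Type} [NormedAddCommGroup E] [InnerProductSpace ℂ E]
    [CompleteSpace E] (p : ι → (E →L[ℂ] E)) (s : E →L[ℂ] E) : Prop :=
  (∀ i, OpLE (p i) s) ∧ ∀ u, (∀ i, OpLE (p i) u) → OpLE s u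

/-- A map `B(H) → B(K)` is normal when it preserves suprema of increasing
(upward directed) nets of projections; this is equivalent to ultraweak
(σ-weak) continuity. -/
def NormalMap (φ : (H →L[ℂ] H) → (K →L[ℂ] K)) : Prop :=
  ∀ (ι : Type) (p : ι → (H →L[ℂ] H)) (s : H →L[ℂ] H),
    (∀ i, IsProjectionOp (p i)) → Directed OpLE p → IsOpLUB p s →
      IsOpLUB (fun i => φ (p i)) (φ s)

/-- The Hilbert space tensor product of `E` and `F`, presented abstractly: a Hilbert
space `W` together with a bilinear map `p : E → F → W` whose image consists of the
elementary tensors: inner products multiply, and the span of the image is dense. -/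
structure HilbertTensor (E F W : Type) [NormedAddCommGroup E] [InnerProductSpace ℂ E]
    [NormedAddCommGroup F] [InnerProductSpace ℂ F]
    [NormedAddCommGroup W] [InnerProductSpace ℂ W] where
  p : E →ₗ[ℂ] F →ₗ[ℂ] W
  inner_p : ∀ (x x' : E) (y y' : F),
    (inner ℂ (p x y) (p x' y') : ℂ) = (inner ℂ x x' : ℂ) * (inner ℂ y y' : ℂ)
  dense_span : Dense (Submodule.span ℂ
    (Set.range fun xy : E × F => p xy.1 xy.2) : Set W)

/-- `T` is the amplification `f ↦ f ⊗ id` along the Hilbert tensor product `J`. -/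
def IsAmpl {E F W : Type} [NormedAddCommGroup E] [InnerProductSpace ℂ E]
    [NormedAddCommGroup F] [InnerProductSpace ℂ F]
    [NormedAddCommGroup W] [InnerProductSpace ℂ W]
    (J : HilbertTensor E F W) (T : (E →L[ℂ] E) → (W →L[ℂ] W)) : Prop :=
  ∀ (f : E →L[ℂ] E) (x : E) (y : F), T f (J.p x y) = J.p (f x) y

/-- A bundled complex Hilbert space. -/
structure HilbPre where
  carrier : Type
  [ng : NormedAddCommGroup carrier]
  [ip : InnerProductSpace ℂ carrier]
  [cs : CompleteSpace carrier]

attribute [instance] HilbPre.ng HilbPre.ip HilbPre.cs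


section DixAux
set_option linter.unusedSectionVars false
variable {E : Type} [NormedAddCommGroup E] [InnerProductSpace ℂ E] [CompleteSpace E]

def dixRk (x y : E) : E →L[ℂ] E := (innerSL ℂ y).smulRight x

lemma dixRk_apply (x y z : E) : dixRk x y z = (inner ℂ y z : ℂ) • x := rfl

lemma dixRk_adjoint (x y : E) : ContinuousLinearMap.adjoint (dixRk x y) = dixRk y x := by
  refine (((eq_adjoint_iff (dixRk y x) (dixRk x y))).2 fun u v => ?_).symm
  simp [dixRk_apply, inner_smul_left, inner_smul_right]; ring

lemma dixRk_comp_dixRk (x y x' y' : E) :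
    dixRk x y ∘L dixRk x' y' = (inner ℂ y x' : ℂ) • dixRk x y' := by
  ext z; simp [dixRk_apply, inner_smul_right, smul_smul, mul_comm]

lemma dixComp_dixRk (f : E →L[ℂ] E) (x y : E) : f ∘L dixRk x y = dixRk (f x) y := by
  ext z; simp [dixRk_apply]

lemma dixRk_smul_left (c : ℂ) (x y : E) : dixRk (c • x) y = c • dixRk x y := by
  ext z; simp [dixRk_apply, smul_smul, mul_comm]

lemma dixRk_add_left (x x' y : E) : dixRk (x + x') y = dixRk x y + dixRk x' y := by
  ext z; simp [dixRk_apply, smul_add]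

/-- If `P`, `Q` are projections and `Q ∘ P = P`, then `P ≤ Q`. -/
lemma dixOpLE_of_proj {P Q : E →L[ℂ] E}
    (hP1 : ContinuousLinearMap.adjoint P = P) (hP2 : P ∘L P = P)
    (hQ1 : ContinuousLinearMap.adjoint Q = Q) (hQ2 : Q ∘L Q = Q)
    (h : Q ∘L P = P) : OpLE P Q := by
  have hPQ : P ∘L Q = P := by
    have h' := congrArg (fun T => ContinuousLinearMap.adjoint T) h
    simpa [adjoint_comp, hP1, hQ1] using h'
  refine ⟨Q - P, ?_⟩
  rw [map_sub, hQ1, hP1, sub_comp, comp_sub, comp_sub, hQ2, hP2, h, hPQ]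
  abel

lemma dixSum_adjoint {ι : Type*} (v : ι → E) (F : Finset ι) :
    ContinuousLinearMap.adjoint (∑ i ∈ F, dixRk (v i) (v i))
      = ∑ i ∈ F, dixRk (v i) (v i) := by
  rw [map_sum]
  exact Finset.sum_congr rfl fun i _ => dixRk_adjoint _ _

lemma dixSum_comp {ι : Type*} {v : ι → E} (hv : Orthonormal ℂ v) {F G : Finset ι}
    (h : F ⊆ G) :
    (∑ i ∈ G, dixRk (v i) (v i)) ∘L (∑ i ∈ F, dixRk (v i) (v i))
      = ∑ i ∈ F, dixRk (v i) (v i) := by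
  classical
  have h0 : (∑ i ∈ G, dixRk (v i) (v i)) ∘L (∑ i ∈ F, dixRk (v i) (v i))
      = (∑ i ∈ G, dixRk (v i) (v i)) * (∑ i ∈ F, dixRk (v i) (v i)) := rfl
  rw [h0, Finset.sum_mul_sum, Finset.sum_comm]
  refine Finset.sum_congr rfl fun j hj => ?_
  have h1 : ∀ i ∈ G, dixRk (v i) (v i) * dixRk (v j) (v j)
      = if j = i then dixRk (v i) (v j) else 0 := by
    intro i _
    have h2 : dixRk (v i) (v i) * dixRk (v j) (v j)
        = (inner ℂ (v i) (v j) : ℂ) • dixRk (v i) (v j) := dixRk_comp_dixRk _ _ _ _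
    rw [h2, orthonormal_iff_ite.mp hv i j]
    rcases eq_or_ne i j with rfl | hne
    · simp
    · simp [if_neg hne, if_neg (Ne.symm hne)]
  rw [Finset.sum_congr rfl h1, Finset.sum_ite_eq G j (fun i => dixRk (v i) (v j)),
    if_pos (h hj)]

lemma dixSum_idem {ι : Type*} {v : ι → E} (hv : Orthonormal ℂ v) (F : Finset ι) :
    (∑ i ∈ F, dixRk (v i) (v i)) ∘L (∑ i ∈ F, dixRk (v i) (v i))
      = ∑ i ∈ F, dixRk (v i) (v i) :=
  dixSum_comp hv (subset_refl F)

lemma dixAdjoint_one : ContinuousLinearMap.adjoint (1 : E →L[ℂ] E) = 1 := by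
  rw [← ContinuousLinearMap.star_eq_adjoint, star_one]

lemma dixAdj_inner (c : E →L[ℂ] E) (x : E) :
    (inner ℂ ((ContinuousLinearMap.adjoint c ∘L c) x) x : ℂ) = ((‖c x‖^2 : ℝ) : ℂ) := by
  simp only [comp_apply]
  rw [adjoint_inner_left, inner_self_eq_norm_sq_to_K]
  norm_cast

lemma dixParseval {w : Set E} (b : HilbertBasis w ℂ E) (x : E) :
    HasSum (fun i : w => Complex.normSq (inner ℂ (b i) x : ℂ)) (‖x‖^2) := by
  have h := (b.hasSum_inner_mul_inner x x).mapL Complex.reCLM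
  have h2 : ∀ i : w, Complex.reCLM ((inner ℂ x (b i) : ℂ) * (inner ℂ (b i) x : ℂ))
      = Complex.normSq (inner ℂ (b i) x : ℂ) := by
    intro i
    rw [← inner_conj_symm x (b i), ← Complex.normSq_eq_conj_mul_self]
    simp
  have h3 : Complex.reCLM (inner ℂ x x : ℂ) = ‖x‖^2 := by
    rw [inner_self_eq_norm_sq_to_K]; norm_cast
  rw [h3] at h
  exact h.congr_fun fun i => (h2 i).symm

lemma dixSum_inner {w : Set E} (b : HilbertBasis w ℂ E) (F : Finset w) (x : E) :
    (inner ℂ ((∑ i ∈ F, dixRk (b i) (b i)) x) x : ℂ)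
      = ((∑ i ∈ F, Complex.normSq (inner ℂ (b i) x : ℂ) : ℝ) : ℂ) := by
  rw [ContinuousLinearMap.sum_apply, sum_inner]
  push_cast
  refine Finset.sum_congr rfl fun i _ => ?_
  rw [dixRk_apply, inner_smul_left, ← Complex.normSq_eq_conj_mul_self]

lemma dixLUB_aux {w : Set E} (b : HilbertBasis w ℂ E) (u : E →L[ℂ] E)
    (hu : ∀ F : Finset w, OpLE (∑ i ∈ F, dixRk (b i) (b i)) u) : OpLE 1 u := by
  have hpos : (u - 1).IsPositive := by
    rw [ContinuousLinearMap.isPositive_iff_complex]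
    intro x
    obtain ⟨c0, hc0⟩ := hu ∅
    rw [Finset.sum_empty, sub_zero] at hc0
    have hux : (inner ℂ (u x) x : ℂ) = ((‖c0 x‖^2 : ℝ) : ℂ) := by
      rw [hc0]; exact dixAdj_inner c0 x
    have hxx : (inner ℂ x x : ℂ) = ((‖x‖^2 : ℝ) : ℂ) := by
      rw [inner_self_eq_norm_sq_to_K]; norm_cast
    have hz : (inner ℂ ((u - 1) x) x : ℂ) = ((‖c0 x‖^2 - ‖x‖^2 : ℝ) : ℂ) := by
      rw [ContinuousLinearMap.sub_apply, inner_sub_left, hux, ContinuousLinearMap.one_apply, hxx]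
      push_cast; ring
    constructor
    · rw [hz]; simp [RCLike.re_to_complex]; norm_cast
    · rw [hz]
      have key : ∀ F : Finset w,
          ∑ i ∈ F, Complex.normSq (inner ℂ (b i) x : ℂ) ≤ ‖c0 x‖^2 := by
        intro F
        obtain ⟨c, hc⟩ := hu F
        have heq : (inner ℂ (u x) x : ℂ)
            = (inner ℂ ((∑ i ∈ F, dixRk (b i) (b i)) x) x : ℂ)
              + (inner ℂ ((ContinuousLinearMap.adjoint c ∘L c) x) x : ℂ) := by
          rw [← hc, ContinuousLinearMap.sub_apply, inner_sub_left]
          ring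
        rw [hux, dixSum_inner b F x, dixAdj_inner] at heq
        have h' : (‖c0 x‖^2 : ℝ)
            = (∑ i ∈ F, Complex.normSq (inner ℂ (b i) x : ℂ)) + ‖c x‖^2 := by
          exact_mod_cast heq
        nlinarith [sq_nonneg ‖c x‖]
      have hsum := dixParseval b x
      have hle : ‖x‖^2 ≤ ‖c0 x‖^2 :=
        le_of_tendsto hsum (Filter.Eventually.of_forall key)
      simp only [RCLike.re_to_complex, Complex.ofReal_re]
      linarith
  have h0 : 0 ≤ u - 1 := (ContinuousLinearMap.nonneg_iff_isPositive _).2 hpos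
  refine ⟨CFC.sqrt (u - 1), ?_⟩
  have hs : IsSelfAdjoint (CFC.sqrt (u - 1)) := IsSelfAdjoint.of_nonneg (CFC.sqrt_nonneg _)
  rw [← ContinuousLinearMap.star_eq_adjoint, hs.star_eq]
  exact (CFC.sqrt_mul_sqrt_self _ h0).symm

end DixAux

/-- (Dixmier) Every normal unital `*`-homomorphism `φ : B(H) → B(K)` factors as an
ampliation `f ↦ f ⊗ id_{H'}` (the map `T` along the Hilbert tensor product
`W = H ⊗ H'`), followed by induction `x ↦ p x p` onto a closed subspace `K' ⊆ W`
(with projection `p = P`), followed by a spatial isomorphism `x ↦ u† x u` for a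
unitary `u : K → K'` (an isometry of `K` into `W` with range `K'`, so `u† u = 1`
and `u u† = P`). -/
theorem dixmier (φ : (H →L[ℂ] H) →ₗ[ℂ] (K →L[ℂ] K))
    (hmul : ∀ a b : H →L[ℂ] H, φ (a ∘L b) = φ a ∘L φ b)
    (hstar : ∀ a : H →L[ℂ] H, φ (ContinuousLinearMap.adjoint a) =
      ContinuousLinearMap.adjoint (φ a))
    (hunit : φ 1 = 1)
    (hnormal : NormalMap (fun f => φ f)) :
    ∃ (H' W : HilbPre) (J : HilbertTensor H H'.carrier W.carrier)
      (T : (H →L[ℂ] H) → (W.carrier →L[ℂ] W.carrier))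
      (P : W.carrier →L[ℂ] W.carrier) (u : K →L[ℂ] W.carrier),
      IsAmpl J T ∧ IsProjectionOp P ∧
      ContinuousLinearMap.adjoint u ∘L u = 1 ∧
      u ∘L ContinuousLinearMap.adjoint u = P ∧
      ∀ f : H →L[ℂ] H,
        φ f = ContinuousLinearMap.adjoint u ∘L (P ∘L (T f ∘L (P ∘L u))) := by
    classical
  by_cases htriv : ∀ x : H, x = (0 : H)
  · -- `H` is trivial, hence so is `K`.
    have h1 : (1 : H →L[ℂ] H) = 0 := by
      ext x; rw [htriv x]; simp
    have hK1 : (1 : K →L[ℂ] K) = 0 := by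
      rw [← hunit, h1, map_zero]
    have hK : ∀ k : K, k = 0 := by
      intro k
      have : (1 : K →L[ℂ] K) k = (0 : K →L[ℂ] K) k := by rw [hK1]
      simpa using this
    have hKop : ∀ a b : K →L[ℂ] K, a = b := by
      intro a b
      ext x
      rw [hK (a x), hK (b x)]
    refine ⟨⟨K⟩, ⟨K⟩, ⟨0, ?_, ?_⟩, (fun f => φ f), 1, 1, ?_, ⟨hKop _ _, hKop _ _⟩,
      hKop _ _, hKop _ _, fun f => hKop _ _⟩
    · intro x x' y y'
      rw [htriv x]
      simp
    · intro z
      rw [hK z]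
      exact subset_closure (Submodule.zero_mem _)
    · intro f x y
      simp
  · -- main case : `H` is nontrivial
    push_neg at htriv
    obtain ⟨x0, hx0⟩ := htriv
    set e : H := ‖x0‖⁻¹ • x0 with he_def
    have he : ‖e‖ = 1 := by
      rw [he_def, norm_smul]
      simp [norm_inv, inv_mul_cancel₀ (norm_ne_zero_iff.mpr hx0)]
    have hee : (inner ℂ e e : ℂ) = 1 := by
      rw [inner_self_eq_norm_sq_to_K, he]
      norm_num
    set q : K →L[ℂ] K := φ (dixRk e e) with hq_def
    have hq_idem : q ∘L q = q := by
      rw [hq_def, ← hmul, dixRk_comp_dixRk, hee, one_smul]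
    have hq_adj : ContinuousLinearMap.adjoint q = q := by
      rw [hq_def, ← hstar, dixRk_adjoint]
    set N : Submodule ℂ K := LinearMap.ker ((1 - q : K →L[ℂ] K) : K →ₗ[ℂ] K) with hN_def
    have hmemN : ∀ k : K, k ∈ N ↔ q k = k := by
      intro k
      rw [hN_def, LinearMap.mem_ker]
      constructor
      · intro h
        have : k - q k = 0 := by simpa using h
        have := sub_eq_zero.mp this
        exact this.symm
      · intro h
        have : (1 - q : K →L[ℂ] K) k = k - q k := by simp
        rw [ContinuousLinearMap.coe_coe, this, h, sub_self]
    haveI : CompleteSpace N := (ContinuousLinearMap.isClosed_ker (1 - q)).completeSpace_coe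
    -- the bilinear map
    set Jp : H →ₗ[ℂ] N →ₗ[ℂ] K := LinearMap.mk₂ ℂ (fun x k => φ (dixRk x e) (k : K))
      (fun x x' k => by simp only [dixRk_add_left, map_add]; rfl)
      (fun c x k => by simp only [dixRk_smul_left, map_smul]; rfl)
      (fun x k k' => by simp only [Submodule.coe_add, map_add])
      (fun c x k => by simp only [Submodule.coe_smul, map_smul]) with hJp_def
    have hJp_apply : ∀ (x : H) (k : N), Jp x k = φ (dixRk x e) (k : K) := fun _ _ => rfl
    -- inner products multiply
    have hinner : ∀ (x x' : H) (y y' : N),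
        (inner ℂ (Jp x y) (Jp x' y') : ℂ) = (inner ℂ x x' : ℂ) * (inner ℂ y y' : ℂ) := by
      intro x x' y y'
      rw [hJp_apply, hJp_apply]
      have hy' : q (y' : K) = (y' : K) := (hmemN _).mp y'.2
      have step1 : (inner ℂ (φ (dixRk x e) (y : K)) (φ (dixRk x' e) (y' : K)) : ℂ)
          = inner ℂ (y : K) (ContinuousLinearMap.adjoint (φ (dixRk x e))
              (φ (dixRk x' e) (y' : K))) := (adjoint_inner_right _ _ _).symm
      rw [step1, ← hstar, dixRk_adjoint, ← comp_apply (φ (dixRk e x)), ← hmul,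
        dixRk_comp_dixRk, map_smul, ContinuousLinearMap.smul_apply, ← hq_def, hy',
        inner_smul_right]
      rfl
    -- density of the span
    have hdense : Dense (Submodule.span ℂ
        (Set.range fun xy : H × N => Jp xy.1 xy.2) : Set K) := by
      set S : Submodule ℂ K := (Submodule.span ℂ
        (Set.range fun xy : H × N => Jp xy.1 xy.2)).topologicalClosure with hS_def
      haveI : CompleteSpace S := by
        rw [hS_def]
        exact (Submodule.span ℂ
          (Set.range fun xy : H × N => Jp xy.1 xy.2)).isClosed_topologicalClosure.completeSpace_coe
      set Q : K →L[ℂ] K := S.subtypeL ∘L S.orthogonalProjectionOnto with hQ_def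
      have hQadj : ContinuousLinearMap.adjoint Q = Q :=
        (isSelfAdjoint_starProjection S).adjoint_eq
      have hQmem : ∀ y : K, Q y ∈ S := fun y => (S.orthogonalProjectionOnto y).2
      have hQfix : ∀ y : K, y ∈ S → Q y = y := fun y hy =>
        (Submodule.starProjection_eq_self_iff (K := S)).mpr hy
      have hQidem : Q ∘L Q = Q := by
        ext y
        exact hQfix (Q y) (hQmem y)
      obtain ⟨w, b, hb⟩ := exists_hilbertBasis ℂ H
      have horth : Orthonormal ℂ b := b.orthonormal
      have hrange : ∀ (i : w) (y : K), φ (dixRk (b i) (b i)) y ∈ S := by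
        intro i y
        have hk' : q (φ (dixRk e (b i)) y) = φ (dixRk e (b i)) y := by
          rw [hq_def, ← comp_apply (φ (dixRk e e)), ← hmul, dixRk_comp_dixRk, hee,
            one_smul]
        have h2 : φ (dixRk (b i) (b i)) y
            = Jp (b i) ⟨φ (dixRk e (b i)) y, (hmemN _).mpr hk'⟩ := by
          rw [hJp_apply]
          show _ = φ (dixRk (b i) e) (φ (dixRk e (b i)) y)
          rw [← comp_apply (φ (dixRk (b i) e)), ← hmul, dixRk_comp_dixRk, hee, one_smul]
        rw [h2]
        exact Submodule.le_topologicalClosure _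
          (Submodule.subset_span ⟨((b i), ⟨φ (dixRk e (b i)) y, (hmemN _).mpr hk'⟩), rfl⟩)
      have hrangeF : ∀ (F : Finset w) (y : K),
          φ (∑ i ∈ F, dixRk (b i) (b i)) y ∈ S := by
        intro F y
        rw [map_sum, ContinuousLinearMap.sum_apply]
        exact Submodule.sum_mem S fun i _ => hrange i y
      have hle : ∀ F : Finset w, OpLE (φ (∑ i ∈ F, dixRk (b i) (b i))) Q := by
        intro F
        refine dixOpLE_of_proj ?_ ?_ hQadj hQidem ?_
        · rw [← hstar, dixSum_adjoint]
        · rw [← hmul, dixSum_idem horth]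
        · ext y
          exact hQfix _ (hrangeF F y)
      have hproj : ∀ F : Finset w, IsProjectionOp (∑ i ∈ F, dixRk (b i) (b i)) :=
        fun F => ⟨dixSum_adjoint _ F, dixSum_idem horth F⟩
      have hdir : Directed OpLE (fun F : Finset w => ∑ i ∈ F, dixRk (b i) (b i)) := by
        intro F G
        exact ⟨F ∪ G,
          dixOpLE_of_proj (dixSum_adjoint _ F) (dixSum_idem horth F)
            (dixSum_adjoint _ _) (dixSum_idem horth _)
            (dixSum_comp horth Finset.subset_union_left),
          dixOpLE_of_proj (dixSum_adjoint _ G) (dixSum_idem horth G)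
            (dixSum_adjoint _ _) (dixSum_idem horth _)
            (dixSum_comp horth Finset.subset_union_right)⟩
      have hsup : IsOpLUB (fun F : Finset w => ∑ i ∈ F, dixRk (b i) (b i)) 1 := by
        constructor
        · intro F
          exact dixOpLE_of_proj (dixSum_adjoint _ F) (dixSum_idem horth F)
            dixAdjoint_one (by ext z; rfl) (by ext z; rfl)
        · intro u hu
          exact dixLUB_aux b u hu
      have hlub := hnormal (Finset w) _ 1 hproj hdir hsup
      simp only [hunit] at hlub
      obtain ⟨c, hc⟩ := hlub.2 Q (fun F => hle F)
      intro z
      have h1 : (inner ℂ ((Q - 1) z) z : ℂ) = ((‖c z‖^2 : ℝ) : ℂ) := by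
        rw [hc]; exact dixAdj_inner c z
      have hQz : (inner ℂ (Q z) z : ℂ) = ((‖Q z‖^2 : ℝ) : ℂ) := by
        have e1 : (inner ℂ (Q z) z : ℂ) = inner ℂ (Q (Q z)) z := by
          rw [hQfix (Q z) (hQmem z)]
        have e2 : (inner ℂ (Q (Q z)) z : ℂ)
            = inner ℂ ((ContinuousLinearMap.adjoint Q) (Q z)) z := by rw [hQadj]
        rw [e1, e2, adjoint_inner_left, inner_self_eq_norm_sq_to_K]
        norm_cast
      have hzz : (inner ℂ z z : ℂ) = ((‖z‖^2 : ℝ) : ℂ) := by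
        rw [inner_self_eq_norm_sq_to_K]; norm_cast
      have h2 : (inner ℂ ((Q - 1) z) z : ℂ) = ((‖Q z‖^2 - ‖z‖^2 : ℝ) : ℂ) := by
        rw [ContinuousLinearMap.sub_apply, inner_sub_left, ContinuousLinearMap.one_apply, hQz, hzz,
          Complex.ofReal_sub]
      have h3 : (‖c z‖^2 : ℝ) = ‖Q z‖^2 - ‖z‖^2 := by
        rw [h2] at h1
        exact_mod_cast h1.symm
      have horthog : (inner ℂ (Q z) (z - Q z) : ℂ) = 0 := by
        rw [inner_sub_right, hQz, inner_self_eq_norm_sq_to_K]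
        norm_cast
        simp
      have hpyth : ‖z‖^2 = ‖Q z‖^2 + ‖z - Q z‖^2 := by
        have hz' : Q z + (z - Q z) = z := by abel
        have := norm_add_sq (𝕜 := ℂ) (Q z) (z - Q z)
        rw [hz', horthog] at this
        simpa using this
      have h4 : ‖z - Q z‖^2 = 0 := by
        have hnn := sq_nonneg ‖c z‖
        have hnn2 := sq_nonneg ‖z - Q z‖
        linarith [h3, hpyth, hnn, hnn2]
      have h5 : z = Q z := by
        have h6 : ‖z - Q z‖ = 0 := pow_eq_zero_iff two_ne_zero |>.mp h4
        have h7 : z - Q z = 0 := norm_eq_zero.mp h6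
        exact (sub_eq_zero.mp h7)
      have h6 : z ∈ S := h5 ▸ hQmem z
      rw [← Submodule.topologicalClosure_coe]
      exact h6
    refine ⟨⟨N⟩, ⟨K⟩, ⟨Jp, hinner, hdense⟩, (fun f => φ f), 1, 1, ?_, ?_, ?_, ?_, ?_⟩
    · intro f x y
      show φ f (φ (dixRk x e) (y : K)) = φ (dixRk (f x) e) (y : K)
      rw [← comp_apply (φ f), ← hmul, dixComp_dixRk]
    · exact ⟨dixAdjoint_one, by ext z; rfl⟩
    · rw [dixAdjoint_one]; ext z; rfl
    · rw [dixAdjoint_one]; ext z; rfl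
    · intro f
      rw [dixAdjoint_one]
      ext z
      simp
end
end

section
/- The map ξ from CP(C) to Ĉ sending the CP-form of a Kraus morphism f : A → C ⊗ B to (⊤_C ⊗ id_B) ∘ f preserves composition: ξ of the CP-composite of Kraus morphisms f : A → C ⊗ B and g : B → D ⊗ E equals ((⊤_D ⊗ id) ∘ g) ∘ ((⊤_C ⊗ id) ∘ f) in Ĉ. -/
open CategoryTheory MonoidalCategory

universe v u

open Dagger

variable {C : Type u} [Category.{v} C] [MonoidalCategory C] [SymmetricCategory C] [DaggerSMC C]

/-- Discarding a Kraus output into the environment: `(⊤_X ⊗ id_B) ∘ f`. -/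
def xi (e : ∀ A : C, A ⟶ 𝟙_ C) {A B X : C} (f : A ⟶ X ⊗ B) : A ⟶ B :=
  f ≫ (e X ▷ B) ≫ (λ_ B).hom

/-- The map `ξ` sending the CP-form of a Kraus morphism `f : A ⟶ X ⊗ B` to
`(⊤_X ⊗ id_B) ∘ f` preserves composition: `ξ` of the CP-composite of Kraus morphisms
`f : A ⟶ X ⊗ B` and `g : B ⟶ D ⊗ E` (whose Kraus morphism is `(id_X ⊗ g) ∘ f`, up to
associativity) equals `((⊤_D ⊗ id) ∘ g) ∘ ((⊤_X ⊗ id) ∘ f)`, given axiom (a) of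
environment structures. -/
theorem xi_preserves_composition
    (e : ∀ A : C, A ⟶ 𝟙_ C)
    (ha1 : e (𝟙_ C) = 𝟙 (𝟙_ C))
    (ha2 : ∀ A B : C, (e A ⊗ₘ e B) ≫ (λ_ (𝟙_ C)).hom = e (A ⊗ B)) :
    ∀ {A B X D E : C} (f : A ⟶ X ⊗ B) (g : B ⟶ D ⊗ E),
      xi e (f ≫ (X ◁ g) ≫ (α_ X D E).inv) = xi e f ≫ xi e g := by
  intro A B X D E f g
  simp only [xi, ← ha2, Category.assoc]
  congr 1
  simp only [MonoidalCategory.tensorHom_def, MonoidalCategory.comp_whiskerRight,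
    Category.assoc]
  rw [← associator_inv_naturality_left_assoc, MonoidalCategory.whisker_exchange_assoc]
  congr 1
  rw [← associator_inv_naturality_middle_assoc]
  simp [MonoidalCategory.whisker_exchange_assoc]
end

section
/- The canonical functor C → CP(C) on the dagger symmetric monoidal category Hilb, which identifies continuous linear maps f and g whenever their CP-forms agree, identifies exactly global phases: for bounded linear maps f, g : H → K between complex Hilbert spaces, the maps x ↦ f x f† and x ↦ g x g† on B(H) are equal if and only if f = λ g for some complex number λ with |λ| = 1, or f = g = 0. -/
open ContinuousLinearMap

noncomputable section

/-- The canonical functor `Hilb → CP(Hilb)` identifies exactly global phases: for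
bounded linear maps `f, g : H → K` between complex Hilbert spaces, the induced maps
`x ↦ f x f†` and `x ↦ g x g†` on `B(H)` are equal if and only if `f = λ g` for some
complex number `λ` with `|λ| = 1`, or `f = g = 0`. -/
theorem cp_canonical_functor_identifies_global_phases
    {H K : Type} [NormedAddCommGroup H] [InnerProductSpace ℂ H] [CompleteSpace H]
    [NormedAddCommGroup K] [InnerProductSpace ℂ K] [CompleteSpace K]
    (f g : H →L[ℂ] K) :
    (∀ x : H →L[ℂ] H,
        f ∘L (x ∘L ContinuousLinearMap.adjoint f) =
        g ∘L (x ∘L ContinuousLinearMap.adjoint g)) ↔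
    ((∃ lam : ℂ, ‖lam‖ = 1 ∧ f = lam • g) ∨ (f = 0 ∧ g = 0)) := by
  constructor
  · intro h
    -- key pointwise identity
    have key : ∀ (u w : H) (y : K),
        (inner ℂ (f u) y : ℂ) • f w = (inner ℂ (g u) y : ℂ) • g w := by
      intro u w y
      have := congrFun (congrArg DFunLike.coe (h ((innerSL ℂ u).smulRight w))) y
      simpa [ContinuousLinearMap.comp_apply, ContinuousLinearMap.smulRight_apply,
        innerSL_apply_apply, ContinuousLinearMap.adjoint_inner_right, map_smul] using this
    by_cases hf : f = 0
    · right
      refine ⟨hf, ?_⟩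
      ext u
      have := key u u (g u)
      simp only [hf, ContinuousLinearMap.zero_apply, smul_zero] at this
      have h2 : (inner ℂ (g u) (g u) : ℂ) • g u = 0 := this.symm
      rcases smul_eq_zero.mp h2 with h3 | h3
      · simpa using inner_self_eq_zero.mp h3
      · simpa using h3
    · left
      obtain ⟨w₀, hw₀⟩ : ∃ w₀, f w₀ ≠ 0 := by
        by_contra hc
        push_neg at hc
        exact hf (ContinuousLinearMap.ext fun v => by simpa using hc v)
      -- f w₀ = μ • g w₀
      have h1 := key w₀ w₀ (f w₀)
      -- ⟪f w₀, f w₀⟫ • f w₀ = ⟪g w₀, f w₀⟫ • g w₀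
      have hgw₀ : g w₀ ≠ 0 := by
        intro hz
        rw [hz, smul_zero] at h1
        rcases smul_eq_zero.mp h1 with h3 | h3
        · exact hw₀ (inner_self_eq_zero.mp h3)
        · exact hw₀ h3
      have hip : (inner ℂ (f w₀) (g w₀) : ℂ) ≠ 0 := by
        intro hz
        have h2 := key w₀ w₀ (g w₀)
        rw [hz, zero_smul] at h2
        rcases smul_eq_zero.mp h2.symm with h3 | h3
        · exact hgw₀ (inner_self_eq_zero.mp h3)
        · exact hgw₀ h3
      set c : ℂ := (inner ℂ (g w₀) (g w₀) : ℂ) / (inner ℂ (f w₀) (g w₀) : ℂ) with hc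
      have hfc : f = c • g := by
        ext w
        have h2 := key w₀ w (g w₀)
        simp only [ContinuousLinearMap.smul_apply]
        rw [hc, div_eq_inv_mul, ← smul_smul, ← h2, smul_smul, inv_mul_cancel₀ hip,
          one_smul]
      have hcne : c ≠ 0 := by
        intro hz
        apply hw₀
        rw [hfc, hz]
        simp
      -- |c| = 1 from h1
      have hgn : (inner ℂ (g w₀) (g w₀) : ℂ) ≠ 0 := inner_self_ne_zero.mpr hgw₀
      have h1' := h1
      rw [hfc] at h1'
      simp only [ContinuousLinearMap.smul_apply, inner_smul_left, inner_smul_right,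
        smul_smul] at h1'
      -- (conj c * c * ⟪g w₀,g w₀⟫) * c = ⟪g w₀, c g w₀⟫ = c * ⟪g w₀, g w₀⟫
      have h3 : ((starRingEnd ℂ) c * c * (inner ℂ (g w₀) (g w₀) : ℂ) * c) • g w₀
          = (c * (inner ℂ (g w₀) (g w₀) : ℂ)) • g w₀ := by
        convert h1' using 2
        ring
      have h4 : (starRingEnd ℂ) c * c * (inner ℂ (g w₀) (g w₀) : ℂ) * c
          = c * (inner ℂ (g w₀) (g w₀) : ℂ) := by
        have hsub : ((starRingEnd ℂ) c * c * (inner ℂ (g w₀) (g w₀) : ℂ) * c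
            - c * (inner ℂ (g w₀) (g w₀) : ℂ)) • g w₀ = 0 := by
          rw [sub_smul, h3, sub_self]
        rcases smul_eq_zero.mp hsub with h | h
        · exact sub_eq_zero.mp h
        · exact absurd h hgw₀
      have h5 : (starRingEnd ℂ) c * c = 1 := by
        have h6 : ((starRingEnd ℂ) c * c) * (c * (inner ℂ (g w₀) (g w₀) : ℂ))
            = 1 * (c * (inner ℂ (g w₀) (g w₀) : ℂ)) := by linear_combination h4
        exact mul_right_cancel₀ (mul_ne_zero hcne hgn) h6
      refine ⟨c, ?_, hfc⟩
      have hn : ‖c‖ * ‖c‖ = 1 := by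
        have := congrArg norm h5
        simpa [norm_mul] using this
      nlinarith [norm_nonneg c]
  · rintro (⟨lam, hlam, rfl⟩ | ⟨hf, hg⟩)
    · intro x
      ext y
      have hl : (starRingEnd ℂ) lam * lam = 1 := by
        rw [mul_comm, Complex.mul_conj']
        exact_mod_cast by rw [hlam]; simp
      have hl' : lam * (starRingEnd ℂ) lam = 1 := by rw [mul_comm]; exact hl
      simp [ContinuousLinearMap.comp_apply, map_smulₛₗ, map_smul, smul_smul, hl, hl']
    · intro x
      simp [hf, hg]
end
end
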